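/- arXiv:2009.14060 — 2 statements merged into one kernel-verified Lean document; each statement's English description precedes it below -/
import Mathlib

section
/- For natural numbers α, x, n with n ≤ x ≤ α and x+1 ≤ α, the function d_α(x,n) = C(x,n)/C(α,n) satisfies the recurrence (α−x)·d_α(x+1,n) = n·[d_α(x,n−1) − d_α(x,n)] + (α−n)·[d_α(x,n) − d_α(x,n+1)], where terms with n−1 for n=0 or n+1 > α are interpreted via the convention d_α(x,m) = C(x,m)/C(α,m)·1_{m ≤ x} (equal to 0 when m > x). -/
/-- The intertwiner `d_α(x,n) = C(x,n)/C(α,n)` if `n ≤ x`, and `0` otherwise. -/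
noncomputable def dFun (α x n : ℕ) : ℚ :=
  if n ≤ x then (Nat.choose x n : ℚ) / (Nat.choose α n : ℚ) else 0

lemma dFun_eq_desc (α x m : ℕ) (h : m ≤ α) :
    dFun α x m = (Nat.descFactorial x m : ℚ) / (Nat.descFactorial α m : ℚ) := by
  unfold dFun
  by_cases hm : m ≤ x
  · rw [if_pos hm, Nat.descFactorial_eq_factorial_mul_choose,
      Nat.descFactorial_eq_factorial_mul_choose]
    push_cast
    rw [mul_div_mul_left]
    exact_mod_cast Nat.factorial_ne_zero m
  · rw [if_neg hm, Nat.descFactorial_eq_zero_iff_lt.2 (Nat.lt_of_not_le hm)]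
    simp

theorem stmt0 (α x n : ℕ) (hnx : n ≤ x) (hx : x + 1 ≤ α) :
    ((α : ℚ) - (x : ℚ)) * dFun α (x + 1) n =
      (n : ℚ) * (dFun α x (n - 1) - dFun α x n) +
        ((α : ℚ) - (n : ℚ)) * (dFun α x n - dFun α x (n + 1)) := by
  obtain _ | m := n
  · -- n = 0
    have hα : (α : ℚ) ≠ 0 := by
      have : 0 < α := lt_of_lt_of_le (Nat.succ_pos x) hx
      exact_mod_cast this.ne'
    rw [dFun_eq_desc α (x+1) 0 (Nat.zero_le α), dFun_eq_desc α x 0 (Nat.zero_le α),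
      dFun_eq_desc α x 1 (by omega)]
    simp only [Nat.descFactorial_zero, Nat.descFactorial_one, Nat.cast_one, Nat.cast_zero]
    field_simp
    ring
  · -- n = m + 1
    have hmx : m + 1 ≤ x := hnx
    have h1 : m ≤ α := by omega
    have h2 : m + 1 ≤ α := by omega
    have h3 : m + 2 ≤ α := by omega
    simp only [Nat.add_sub_cancel]
    rw [dFun_eq_desc α (x+1) (m+1) h2, dFun_eq_desc α x m h1, dFun_eq_desc α x (m+1) h2,
      dFun_eq_desc α x (m+2) h3]
    rw [Nat.succ_descFactorial_succ, show m + 2 = (m+1)+1 from rfl,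
      Nat.descFactorial_succ x (m+1), Nat.descFactorial_succ x m,
      Nat.descFactorial_succ α (m+1), Nat.descFactorial_succ α m]
    have hX : (Nat.descFactorial α m : ℚ) ≠ 0 := by
      have : Nat.descFactorial α m ≠ 0 := fun h0 => by
        have := Nat.descFactorial_eq_zero_iff_lt.1 h0; omega
      exact_mod_cast this
    have hA1 : (α : ℚ) - m ≠ 0 := by
      have : m < α := by omega
      have := Nat.cast_lt (α := ℚ) |>.2 this
      linarith
    have hA2 : (α : ℚ) - (m + 1) ≠ 0 := by
      have : m + 1 < α := by omega
      have := Nat.cast_lt (α := ℚ) |>.2 this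
      push_cast at this ⊢
      linarith
    push_cast [Nat.cast_sub (by omega : m ≤ x), Nat.cast_sub (by omega : m + 1 ≤ x),
      Nat.cast_sub (by omega : m ≤ α), Nat.cast_sub (by omega : m + 1 ≤ α)]
    push_cast at hA2
    field_simp
    ring
end

section
/- With the operators of the previous context (J^{α,+}, J^{α,−}, J^{α,0} and A^{α,+}, A^{α,−}, A^{α,0} on functions [α] → ℝ) and d_α(x,n) = C(x,n)/C(α,n)·1_{n≤x}, the intertwining relations hold: (J^{α,+} d_α(·,n))(x) = (A^{α,+} d_α(x,·))(n), (J^{α,−} d_α(·,n))(x) = (A^{α,−} d_α(x,·))(n), and (J^{α,0} d_α(·,n))(x) = (A^{α,0} d_α(x,·))(n), for all x, n ∈ [α]. -/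
/-- `J⁺ f(n) = (α−n) f(n+1)`. -/
noncomputable def Jp (α : ℕ) (f : ℕ → ℝ) (n : ℕ) : ℝ := ((α : ℝ) - (n : ℝ)) * f (n + 1)

/-- `J⁻ f(n) = n f(n−1)` (the value `f(−1)` carries coefficient `0`). -/
noncomputable def Jm (f : ℕ → ℝ) (n : ℕ) : ℝ := (n : ℝ) * f (n - 1)

/-- `J⁰ f(n) = (n − α/2) f(n)`. -/
noncomputable def J0 (α : ℕ) (f : ℕ → ℝ) (n : ℕ) : ℝ := ((n : ℝ) - (α : ℝ) / 2) * f n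

/-- `A⁺ = J⁻ − J⁺ − 2J⁰`. -/
noncomputable def Ap (α : ℕ) (f : ℕ → ℝ) (n : ℕ) : ℝ := Jm f n - Jp α f n - 2 * J0 α f n

/-- `A⁻ = J⁺`. -/
noncomputable def Am (α : ℕ) (f : ℕ → ℝ) (n : ℕ) : ℝ := Jp α f n

/-- `A⁰ = J⁺ + J⁰`. -/
noncomputable def A0 (α : ℕ) (f : ℕ → ℝ) (n : ℕ) : ℝ := Jp α f n + J0 α f n

/-- `d_α(x,n) = C(x,n)/C(α,n)` if `n ≤ x`, else `0`. -/
noncomputable def dR (α x n : ℕ) : ℝ :=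
  if n ≤ x then (Nat.choose x n : ℝ) / (Nat.choose α n : ℝ) else 0

lemma cast_choose_id (x n : ℕ) (h : n ≤ x) :
    (x.choose (n+1) : ℝ) * (n+1) = (x.choose n : ℝ) * ((x:ℝ) - n) := by
  have h2 := congrArg (Nat.cast (R := ℝ)) (Nat.choose_succ_right_eq x n)
  push_cast [Nat.cast_sub h] at h2
  linarith

lemma cast_succ_mul_choose (x n : ℕ) :
    ((x:ℝ)+1) * (x.choose n : ℝ) = ((x+1).choose (n+1) : ℝ) * ((n:ℝ)+1) := by
  have h2 := congrArg (Nat.cast (R := ℝ)) (Nat.add_one_mul_choose_eq x n)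
  push_cast at h2
  linarith

lemma keyL3 (α x n : ℕ) (hx : x ≤ α) (hn : n ≤ x) :
    ((α:ℝ) - n) * dR α x (n+1) = ((x:ℝ) - n) * dR α x n := by
  rcases eq_or_lt_of_le hn with rfl | hlt
  · simp [dR, Nat.not_succ_le_self]
  · have hnα : n < α := lt_of_lt_of_le hlt hx
    rw [dR, dR, if_pos (Nat.succ_le_of_lt hlt), if_pos hn]
    have h1 := cast_choose_id x n hn
    have h2 := cast_choose_id α n hnα.le
    have d1 : (Nat.choose α n : ℝ) ≠ 0 := by
      exact_mod_cast (Nat.choose_pos hnα.le).ne'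
    have d2 : (Nat.choose α (n+1) : ℝ) ≠ 0 := by
      exact_mod_cast (Nat.choose_pos hnα).ne'
    have hne : ((n:ℝ)+1) ≠ 0 := by positivity
    field_simp
    apply mul_right_cancel₀ hne
    linear_combination ((α:ℝ)-n)*(α.choose n : ℝ)*h1 - ((x:ℝ)-n)*(x.choose n : ℝ)*h2

lemma keyF1 (α x n : ℕ) (hn : n ≤ x) :
    ((x:ℝ)+1-n) * dR α (x+1) n = ((x:ℝ)+1) * dR α x n := by
  have key : ((x:ℝ)+1-n) * ((x+1).choose n : ℝ) = ((x:ℝ)+1) * (x.choose n : ℝ) := by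
    have h1 := cast_choose_id (x+1) n (hn.trans (Nat.le_succ x))
    have h2 := cast_succ_mul_choose x n
    push_cast at h1 h2
    have hne : ((n:ℝ)+1) ≠ 0 := by positivity
    apply mul_right_cancel₀ hne
    linear_combination (-((n:ℝ)+1))*h1 - ((n:ℝ)+1)*h2
  rw [dR, dR, if_pos (hn.trans (Nat.le_succ x)), if_pos hn, ← mul_div_assoc,
    ← mul_div_assoc, key]

lemma keyF2 (α x n : ℕ) (hx : x ≤ α) (hn : n ≤ x) :
    ((x:ℝ)-n+1) * ((n:ℝ) * dR α x (n-1)) = (n:ℝ)*(((α:ℝ)-n+1) * dR α x n) := by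
  cases n with
  | zero => simp
  | succ m =>
    have hm : m ≤ x := Nat.le_of_succ_le hn
    have hmα : m < α := lt_of_lt_of_le hn hx
    rw [dR, dR, Nat.add_sub_cancel, if_pos hm, if_pos hn]
    have h1 := cast_choose_id x m hm
    have h2 := cast_choose_id α m hmα.le
    have d1 : (Nat.choose α m : ℝ) ≠ 0 := by
      exact_mod_cast (Nat.choose_pos hmα.le).ne'
    have d2 : (Nat.choose α (m+1) : ℝ) ≠ 0 := by
      exact_mod_cast (Nat.choose_pos hmα).ne'
    push_cast
    field_simp
    apply mul_right_cancel₀ (by positivity : ((m:ℝ)+1) ≠ 0)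
    linear_combination ((x:ℝ)-m)*(x.choose m:ℝ)*h2 - (α.choose m:ℝ)*((α:ℝ)-m)*h1

/-- Intertwining relations: the `J` operators acting in the `x` variable are dual,
via `d_α`, to the `A` operators acting in the `n` variable. -/
theorem stmt9 (α : ℕ) (hα : 1 ≤ α) (x n : ℕ) (hx : x ≤ α) (hn : n ≤ α) :
    (Jp α (fun x' => dR α x' n) x = Ap α (fun n' => dR α x n') n) ∧
    (Jm (fun x' => dR α x' n) x = Am α (fun n' => dR α x n') n) ∧
    (J0 α (fun x' => dR α x' n) x = A0 α (fun n' => dR α x n') n) := by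
  refine ⟨?_, ?_, ?_⟩ <;> simp only [Jp, Jm, J0, Ap, Am, A0]
  · -- J⁺ relation
    rcases Nat.lt_or_ge x n with hxn | hnx
    · rcases eq_or_lt_of_le (Nat.succ_le_of_lt hxn) with hxe | hlt2
      · -- n = x + 1
        subst hxe
        have hx1 : x + 1 ≤ α := hn
        have d1 : (Nat.choose α x : ℝ) ≠ 0 := by
          exact_mod_cast (Nat.choose_pos hx).ne'
        have d2 : (Nat.choose α (x+1) : ℝ) ≠ 0 := by
          exact_mod_cast (Nat.choose_pos hx1).ne'
        have h2 := cast_choose_id α x hx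
        simp only [dR, Nat.add_sub_cancel, le_refl, add_tsub_cancel_right, Nat.succ_sub_one, if_pos, Nat.choose_self,
          Nat.cast_one, if_neg (by omega : ¬ (x+1 ≤ x)),
          if_neg (by omega : ¬ (x+1+1 ≤ x))]
        push_cast
        field_simp
        linear_combination -h2
      · -- n > x + 1
        simp [dR, if_neg (by omega : ¬ (n ≤ x+1)),
          if_neg (by omega : ¬ (n - 1 ≤ x)), if_neg (by omega : ¬ (n ≤ x)),
          if_neg (by omega : ¬ (n + 1 ≤ x))]
        exact fun h => absurd h (by omega)
    · -- n ≤ x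
      have hF1 := keyF1 α x n hnx
      have hF2 := keyF2 α x n hx hnx
      have hF3 := keyL3 α x n hx hnx
      have hne : ((x:ℝ)+1-n) ≠ 0 := by
        have : (n:ℝ) ≤ x := by exact_mod_cast hnx
        nlinarith
      apply mul_left_cancel₀ hne
      linear_combination ((α:ℝ)-x)*hF1 - hF2 + ((x:ℝ)+1-n)*hF3
  · -- J⁻ relation
    rcases Nat.lt_or_ge x n with hxn | hnx
    · cases x with
      | zero => simp [dR, if_neg (by omega : ¬ (n + 1 ≤ 0))]
      | succ m =>
        simp only [dR, Nat.add_sub_cancel]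
        rw [if_neg (by omega : ¬ n ≤ m), if_neg (by omega : ¬ n + 1 ≤ m + 1)]
        simp
    · rw [keyL3 α x n hx hnx]
      cases x with
      | zero =>
        obtain rfl : n = 0 := Nat.le_zero.mp hnx
        simp [dR]
      | succ m =>
        rcases Nat.lt_or_ge m n with h1 | h2
        · obtain rfl : n = m + 1 := by omega
          simp only [dR, Nat.add_sub_cancel, if_neg (by omega : ¬ (m+1 ≤ m))]
          push_cast
          ring
        · have hk := keyF1 α m n h2
          simp only [Nat.add_sub_cancel]
          push_cast at hk ⊢
          linarith
  · -- J⁰ relation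
    rcases Nat.lt_or_ge x n with hxn | hnx
    · simp only [dR, if_neg (by omega : ¬ (n ≤ x)), if_neg (by omega : ¬ (n + 1 ≤ x))]
      ring
    · have := keyL3 α x n hx hnx
      linarith
end
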